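/- (Approximation guarantee of the RLA algorithm.) Let f be a nonnegative k-submodular function with f(0) = 0 and V ≠ ∅. Let o be a k-set with c(o) ≤ B maximizing f among all k-sets of cost at most B, and write opt = f(o). Let ε be a real with 0 < ε < 1/5 and let v be a real with opt/(1+ε) ≤ v ≤ opt. Let s = s^n be the output of an RLA run with threshold τ = 2v/(5B), and let (e_m, i_m) ∈ V × {1,…,k} maximize f((e,i)) over all e ∈ V and i ∈ {1,…,k}. Then max{f(s), f((e_m,i_m))} ≥ (1/5 − ε)·opt. -/

import Mathlib

/-- The meet `x ⊓ y` of two `k`-sets, with components `Xᵢ ∩ Yᵢ`. -/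
def sqcap {V : Type*} (x y : V → ℕ) : V → ℕ :=
  fun e => if x e = y e then x e else 0

/-- The join `x ⊔ y` of two `k`-sets, with components
`Zᵢ = (Xᵢ ∪ Yᵢ) \ ⋃_{j ≠ i} (Xⱼ ∪ Yⱼ)`. -/
def sqcup {V : Type*} (x y : V → ℕ) : V → ℕ :=
  fun e =>
    if x e = 0 then y e
    else if y e = 0 then x e
    else if x e = y e then x e else 0

/-- A `k`-set: every element gets a position in `{0, 1, …, k}`
(`0` meaning unselected). -/
def IsKSet {V : Type*} (k : ℕ) (x : V → ℕ) : Prop := ∀ e, x e ≤ k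

/-- `x ⊑ y`: every component of `x` is contained in the corresponding
component of `y`. -/
def KLE {V : Type*} (x y : V → ℕ) : Prop := ∀ e, x e ≠ 0 → y e = x e

/-- The singleton `k`-set `(e, i)`. -/
def singl {V : Type*} [DecidableEq V] (e : V) (i : ℕ) : V → ℕ :=
  fun e' => if e' = e then i else 0

/-- `k`-submodularity: `f x + f y ≥ f (x ⊓ y) + f (x ⊔ y)` for all `k`-sets. -/
def KSubmodular {V : Type*} (k : ℕ) (f : (V → ℕ) → ℝ) : Prop :=
  ∀ x y : V → ℕ, IsKSet k x → IsKSet k y →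
    f x + f y ≥ f (sqcap x y) + f (sqcup x y)

/-- The marginal gain `Δ_{(e,i)} f(x) = f (x ⊔ (e,i)) - f x`. -/
def marg {V : Type*} [DecidableEq V] (f : (V → ℕ) → ℝ) (e : V) (i : ℕ)
    (x : V → ℕ) : ℝ :=
  f (sqcup x (singl e i)) - f x

/-- The cost of a `k`-set: the total cost of its support. -/
noncomputable def cost {V : Type*} [Fintype V] (c : V → ℝ) (x : V → ℕ) : ℝ :=
  ∑ e ∈ Finset.univ.filter (fun e => x e ≠ 0), c e

/-- update helper -/
def upd {V : Type*} [DecidableEq V] (x : V → ℕ) (e : V) (i : ℕ) : V → ℕ :=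
  fun e' => if e' = e then i else x e'

section Aux
variable {V : Type*} [DecidableEq V]

lemma upd_self (x : V → ℕ) (e : V) (i : ℕ) : upd x e i e = i := by simp [upd]

lemma upd_other (x : V → ℕ) (e : V) (i : ℕ) {e' : V} (h : e' ≠ e) :
    upd x e i e' = x e' := by simp [upd, h]

lemma upd_isKSet {k : ℕ} {x : V → ℕ} (hx : IsKSet k x) (e : V) {i : ℕ} (hi : i ≤ k) :
    IsKSet k (upd x e i) := by
  intro e'; unfold upd; split
  · exact hi
  · exact hx e'

lemma sqcup_singl_eq (x : V → ℕ) (e : V) (i : ℕ) (hx : x e = 0) :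
    sqcup x (singl e i) = upd x e i := by
  funext e'
  by_cases h : e' = e
  · subst h; simp [sqcup, singl, upd, hx]
  · by_cases hx' : x e' = 0 <;> simp [sqcup, singl, upd, h, hx']

lemma marg_eq_upd (f : (V → ℕ) → ℝ) (e : V) (i : ℕ) (x : V → ℕ) (hx : x e = 0) :
    marg f e i x = f (upd x e i) - f x := by
  rw [marg, sqcup_singl_eq x e i hx]

lemma pairwise_mono {k : ℕ} {f : (V → ℕ) → ℝ} (hsub : KSubmodular k f)
    (x : V → ℕ) (hx : IsKSet k x) (e : V) (hxe : x e = 0)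
    {i j : ℕ} (hi0 : i ≠ 0) (hik : i ≤ k) (hj0 : j ≠ 0) (hjk : j ≤ k) (hij : i ≠ j) :
    0 ≤ marg f e i x + marg f e j x := by
  have h := hsub (upd x e i) (upd x e j) (upd_isKSet hx e hik) (upd_isKSet hx e hjk)
  have hcap : sqcap (upd x e i) (upd x e j) = x := by
    funext e'
    by_cases he : e' = e
    · subst he; simp [sqcap, upd, hij, hxe]
    · simp [sqcap, upd, he]
  have hcup : sqcup (upd x e i) (upd x e j) = x := by
    funext e'
    by_cases he : e' = e
    · subst he; simp [sqcup, upd, hij, hxe, hi0, hj0]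
    · by_cases hx' : x e' = 0 <;> simp [sqcup, upd, he, hx']
  rw [hcap, hcup] at h
  rw [marg_eq_upd f e i x hxe, marg_eq_upd f e j x hxe]
  linarith

lemma orthant {k : ℕ} {f : (V → ℕ) → ℝ} (hsub : KSubmodular k f)
    (x y : V → ℕ) (hx : IsKSet k x) (hy : IsKSet k y) (hxy : KLE x y)
    (e : V) (hye : y e = 0) {i : ℕ} (hi0 : i ≠ 0) (hik : i ≤ k) :
    marg f e i y ≤ marg f e i x := by
  have hxe : x e = 0 := by
    by_contra h
    exact h (by rw [← hxy e h, hye])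
  have h := hsub (upd x e i) y (upd_isKSet hx e hik) hy
  have hcap : sqcap (upd x e i) y = x := by
    funext e'
    by_cases he : e' = e
    · subst he; simp [sqcap, upd, hye, hi0, hxe]
    · by_cases hx' : x e' = 0
      · by_cases hy' : y e' = 0
        · simp [sqcap, upd, he, hx', hy']
        · have : ¬ (x e' = y e') := by rw [hx']; exact fun h' => hy' h'.symm
          simp [sqcap, upd, he, hx', this]
      · simp [sqcap, upd, he, hxy e' hx']
  have hcup : sqcup (upd x e i) y = upd y e i := by
    funext e'
    by_cases he : e' = e
    · subst he; simp [sqcup, upd, hye, hi0]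
    · by_cases hx' : x e' = 0
      · simp [sqcup, upd, he, hx']
      · have := hxy e' hx'
        simp [sqcup, upd, he, hx', this, hx']
  rw [hcap, hcup] at h
  rw [marg_eq_upd f e i x hxe, marg_eq_upd f e i y hye]
  linarith

lemma sqcup_ne_zero {x y : V → ℕ} {e' : V} (h : sqcup x y e' ≠ 0) :
    x e' ≠ 0 ∨ y e' ≠ 0 := by
  unfold sqcup at h
  split at h
  · exact Or.inr h
  · split at h
    · exact Or.inl h
    · split at h
      · exact Or.inl h
      · exact absurd rfl h

lemma sqcup_isKSet {k : ℕ} {x y : V → ℕ} (hx : IsKSet k x) (hy : ∀ e', y e' ≤ k) :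
    IsKSet k (sqcup x y) := by
  intro e'; unfold sqcup
  split
  · exact hy e'
  split
  · exact hx e'
  split
  · exact hx e'
  · exact Nat.zero_le k

lemma cost_upd {V : Type*} [Fintype V] [DecidableEq V] (c : V → ℝ) (x : V → ℕ)
    (e : V) (i : ℕ) (hx : x e = 0) (hi : i ≠ 0) :
    cost c (upd x e i) = cost c x + c e := by
  unfold cost
  have hfil : Finset.univ.filter (fun e' => upd x e i e' ≠ 0)
      = insert e (Finset.univ.filter (fun e' => x e' ≠ 0)) := by
    ext e'
    by_cases h : e' = e
    · subst h; simp only [Finset.mem_filter, Finset.mem_insert, Finset.mem_univ, true_and]; simp [upd, hi]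
    · simp only [Finset.mem_filter, Finset.mem_insert, Finset.mem_univ, true_and]; simp [upd, h]
  rw [hfil, Finset.sum_insert (by simp [hx])]
  ring

lemma cost_zero {V : Type*} [Fintype V] (c : V → ℝ) :
    cost c (fun _ => (0:ℕ)) = 0 := by
  simp [cost]

end Aux

/-- approximation guarantee of `RLA`: with `o` optimal,
`opt/(1+ε) ≤ v ≤ opt`, threshold `τ = 2v/(5B)` and `(e_m, i_m)` a best
singleton, `max {f(s), f((e_m,i_m))} ≥ (1/5 − ε)·opt`. -/
theorem stmt8 {V : Type*} [Fintype V] [DecidableEq V] [Nonempty V]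
    (k : ℕ) (hk : 2 ≤ k)
    (f : (V → ℕ) → ℝ)
    (hsub : KSubmodular k f)
    (hnn : ∀ x : V → ℕ, IsKSet k x → 0 ≤ f x)
    (hf0 : f (fun _ => 0) = 0)
    (c : V → ℝ) (hc : ∀ e, 0 < c e) (B : ℝ) (hB : 0 < B)
    (o : V → ℕ) (ho : IsKSet k o) (hoB : cost c o ≤ B)
    (hopt : ∀ y : V → ℕ, IsKSet k y → cost c y ≤ B → f y ≤ f o)
    (ε : ℝ) (hε0 : 0 < ε) (hε1 : ε < 1 / 5)
    (v : ℝ) (hv1 : f o / (1 + ε) ≤ v) (hv2 : v ≤ f o)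
    (τ : ℝ) (hτdef : τ = 2 * v / (5 * B)) (hτ : 0 ≤ τ)
    (n : ℕ) (e : ℕ → V)
    (hinj : ∀ j₁ j₂, j₁ < n → j₂ < n → e j₁ = e j₂ → j₁ = j₂)
    (hsurj : ∀ v : V, ∃ j, j < n ∧ e j = v)
    (s : ℕ → (V → ℕ)) (pos : ℕ → ℕ)
    (hs0 : s 0 = fun _ => 0)
    (hposk : ∀ j < n, 1 ≤ pos j ∧ pos j ≤ k)
    (hbest : ∀ j < n, ∀ l, 1 ≤ l → l ≤ k →
      marg f (e j) l (s j) ≤ marg f (e j) (pos j) (s j))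
    (hstep : ∀ j < n,
      ((cost c (s j) + c (e j) ≤ B ∧ c (e j) * τ ≤ marg f (e j) (pos j) (s j)) →
        s (j + 1) = sqcup (s j) (singl (e j) (pos j))) ∧
      (¬ (cost c (s j) + c (e j) ≤ B ∧ c (e j) * τ ≤ marg f (e j) (pos j) (s j)) →
        s (j + 1) = s j))
    (em : V) (im : ℕ) (him1 : 1 ≤ im) (him2 : im ≤ k)
    (hem : ∀ (e' : V) (i : ℕ), 1 ≤ i → i ≤ k → f (singl e' i) ≤ f (singl em im)) :
    (1 / 5 - ε) * f o ≤ max (f (s n)) (f (singl em im)) := by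
  classical
  set M := f (singl em im) with hM
  set cond : ℕ → Prop := fun j =>
    cost c (s j) + c (e j) ≤ B ∧ c (e j) * τ ≤ marg f (e j) (pos j) (s j) with hcond
  -- basic facts about the run
  have hks : ∀ j, j ≤ n → IsKSet k (s j) := by
    intro j
    induction j with
    | zero => intro _; rw [hs0]; intro e'; exact Nat.zero_le k
    | succ j ih =>
      intro hj
      have hjn : j < n := hj
      rcases Classical.em (cond j) with hc' | hc'
      · rw [(hstep j hjn).1 hc']
        exact sqcup_isKSet (ih hjn.le) (fun e' => by
          unfold singl; split
          · exact (hposk j hjn).2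
          · exact Nat.zero_le k)
      · rw [(hstep j hjn).2 hc']; exact ih hjn.le
  have hsupp : ∀ j, j ≤ n → ∀ e', s j e' ≠ 0 → ∃ t, t < n ∧ t < j ∧ e t = e' := by
    intro j
    induction j with
    | zero => intro _ e' h; rw [hs0] at h; exact absurd rfl h
    | succ j ih =>
      intro hj e' h
      have hjn : j < n := hj
      rcases Classical.em (cond j) with hc' | hc'
      · rw [(hstep j hjn).1 hc'] at h
        rcases sqcup_ne_zero h with h1 | h1
        · obtain ⟨t, ht1, ht2, ht3⟩ := ih hjn.le e' h1
          exact ⟨t, ht1, ht2.trans (Nat.lt_succ_self j), ht3⟩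
        · refine ⟨j, hjn, Nat.lt_succ_self j, ?_⟩
          unfold singl at h1
          by_cases hcase : e' = e j
          · exact hcase.symm
          · simp [hcase] at h1
      · rw [(hstep j hjn).2 hc'] at h
        obtain ⟨t, ht1, ht2, ht3⟩ := ih hjn.le e' h
        exact ⟨t, ht1, ht2.trans (Nat.lt_succ_self j), ht3⟩
  have hfree : ∀ j, j < n → s j (e j) = 0 := by
    intro j hj
    by_contra h
    obtain ⟨t, htn, htj, hte⟩ := hsupp j hj.le _ h
    exact absurd (hinj t j htn hj hte) (Nat.ne_of_lt htj)
  have hsucc : ∀ j, j < n →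
      (cond j ∧ s (j+1) = upd (s j) (e j) (pos j)) ∨ (¬ cond j ∧ s (j+1) = s j) := by
    intro j hj
    rcases Classical.em (cond j) with hc' | hc'
    · exact Or.inl ⟨hc', by
        rw [(hstep j hj).1 hc', sqcup_singl_eq _ _ _ (hfree j hj)]⟩
    · exact Or.inr ⟨hc', (hstep j hj).2 hc'⟩
  have hfix : ∀ j, j < n → ∀ j', j < j' → j' ≤ n → s j' (e j) = s (j+1) (e j) := by
    intro j hj j'
    induction j' with
    | zero => intro h; exact absurd h (Nat.not_lt_zero j)
    | succ j' ih =>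
      intro h1 h2
      rcases eq_or_lt_of_le (Nat.lt_succ_iff.mp h1) with heq | hlt
      · rw [heq]
      · have hj'n : j' < n := h2
        have hne : e j ≠ e j' := fun h' =>
          absurd (hinj j j' hj hj'n h') (Nat.ne_of_lt hlt)
        have : s (j'+1) (e j) = s j' (e j) := by
          rcases hsucc j' hj'n with ⟨_, heq'⟩ | ⟨_, heq'⟩
          · rw [heq', upd_other _ _ _ hne]
          · rw [heq']
        rw [this]
        exact ih hlt hj'n.le
  have hposne : ∀ j, j < n → pos j ≠ 0 := by
    intro j hj
    have := (hposk j hj).1; omega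
  have hcost_step : ∀ j, j < n → cond j → cost c (s (j+1)) = cost c (s j) + c (e j) := by
    intro j hj hcj
    rcases hsucc j hj with ⟨_, heq⟩ | ⟨hnc, _⟩
    · rw [heq]; exact cost_upd c (s j) (e j) (pos j) (hfree j hj) (hposne j hj)
    · exact absurd hcj hnc
  have hmarg_step : ∀ j, j < n → cond j →
      f (s (j+1)) = f (s j) + marg f (e j) (pos j) (s j) := by
    intro j hj hcj
    rcases hsucc j hj with ⟨_, heq⟩ | ⟨hnc, _⟩
    · rw [heq, marg_eq_upd f _ _ _ (hfree j hj)]; ring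
    · exact absurd hcj hnc
  have hstep_f_le : ∀ j, j < n → f (s j) ≤ f (s (j+1)) := by
    intro j hj
    rcases Classical.em (cond j) with hcj | hcj
    · have h1 := hcj.2
      have h2 : 0 ≤ c (e j) * τ := mul_nonneg (hc (e j)).le hτ
      rw [hmarg_step j hj hcj]; linarith
    · rw [(hstep j hj).2 hcj]
  have hf_mono : ∀ j j', j ≤ j' → j' ≤ n → f (s j) ≤ f (s j') := by
    intro j j' hjj'
    induction j' with
    | zero =>
      intro _
      have h0 : j = 0 := Nat.le_zero.mp hjj'
      rw [h0]
    | succ j' ih =>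
      intro h2
      rcases eq_or_lt_of_le hjj' with heq | hlt
      · rw [heq]
      · exact (ih (Nat.lt_succ_iff.mp hlt) (Nat.le_of_succ_le h2)).trans
          (hstep_f_le j' h2)
  have hcost_le : ∀ j, j < n → cost c (s j) ≤ cost c (s n) := by
    have step : ∀ j, j < n → cost c (s j) ≤ cost c (s (j+1)) := by
      intro j hj
      rcases Classical.em (cond j) with hcj | hcj
      · rw [hcost_step j hj hcj]; linarith [hc (e j)]
      · rw [(hstep j hj).2 hcj]
    have : ∀ j j', j ≤ j' → j' ≤ n → cost c (s j) ≤ cost c (s j') := by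
      intro j j' hjj'
      induction j' with
      | zero =>
        intro _
        have h0 : j = 0 := Nat.le_zero.mp hjj'
        rw [h0]
      | succ j' ih =>
        intro h2
        rcases eq_or_lt_of_le hjj' with heq | hlt
        · rw [heq]
        · exact (ih (Nat.lt_succ_iff.mp hlt) (Nat.le_of_succ_le h2)).trans (step j' h2)
    exact fun j hj => this j n hj.le le_rfl
  have hrun : ∀ j, j ≤ n → τ * cost c (s j) ≤ f (s j) := by
    intro j
    induction j with
    | zero => intro _; rw [hs0, cost_zero, hf0]; simp
    | succ j ih =>
      intro hj
      have hjn : j < n := hj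
      rcases Classical.em (cond j) with hcj | hcj
      · rw [hcost_step j hjn hcj, hmarg_step j hjn hcj]
        have h1 := hcj.2
        have h2 := ih hjn.le
        have : τ * (cost c (s j) + c (e j)) = τ * cost c (s j) + c (e j) * τ := by ring
        rw [this]
        linarith
      · rw [(hstep j hjn).2 hcj]
        exact ih hjn.le
  set O : ℕ → V → ℕ := fun j e' => if ∃ t, t < j ∧ e t = e' then s n e' else o e' with hO
  have hOdef : ∀ j e', O j e' = if ∃ t, t < j ∧ e t = e' then s n e' else o e' :=
    fun _ _ => rfl
  have hO0 : O 0 = o := by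
    funext e'; rw [hOdef, if_neg]; rintro ⟨t, ht, _⟩; omega
  have hOn : O n = s n := by
    funext e'; rw [hOdef, if_pos]
    obtain ⟨t, h1, h2⟩ := hsurj e'; exact ⟨t, h1, h2⟩
  have hOk : ∀ j, IsKSet k (O j) := by
    intro j e'; rw [hOdef]; split
    · exact hks n le_rfl e'
    · exact ho e'
  have hOs : ∀ j, j ≤ n → KLE (s j) (O j) := by
    intro j hj e' hne
    obtain ⟨t, htn, htj, hte⟩ := hsupp j hj e' hne
    have h1 : O j e' = s n e' := by rw [hOdef, if_pos ⟨t, htj, hte⟩]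
    rw [h1]
    subst hte
    rw [hfix t htn n htn le_rfl, ← hfix t htn j htj hj]
  have hOje : ∀ j, j < n → O j (e j) = o (e j) := by
    intro j hj; rw [hOdef, if_neg]
    rintro ⟨t, htj, hte⟩
    exact absurd (hinj t j (htj.trans hj) hj hte) (Nat.ne_of_lt htj)
  have hOsucc : ∀ j, j < n → O (j+1) = upd (O j) (e j) (s (j+1) (e j)) := by
    intro j hj; funext e'
    by_cases he : e' = e j
    · subst he
      rw [upd_self, hOdef, if_pos ⟨j, Nat.lt_succ_self j, rfl⟩]
      exact hfix j hj n hj le_rfl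
    · rw [upd_other _ _ _ he, hOdef, hOdef]
      by_cases hex : ∃ t, t < j ∧ e t = e'
      · obtain ⟨t, h1, h2⟩ := hex
        rw [if_pos ⟨t, h1.trans (Nat.lt_succ_self j), h2⟩, if_pos ⟨t, h1, h2⟩]
      · rw [if_neg, if_neg hex]
        rintro ⟨t, h1, h2⟩
        rcases Nat.lt_succ_iff_lt_or_eq.mp h1 with h3 | h3
        · exact hex ⟨t, h3, h2⟩
        · subst h3; exact he h2.symm
  set P : ℕ → Prop := fun j => ¬ cond j ∧ o (e j) ≠ 0 with hP
  set r : ℕ → ℝ := fun j => if P j then marg f (e j) (o (e j)) (s j) else 0 with hr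
  have hkey : ∀ j, j < n →
      f (O j) - f (O (j+1)) ≤ 2 * (f (s (j+1)) - f (s j)) + r j := by
    intro j hj
    rcases hsucc j hj with ⟨hcj, hseq⟩ | ⟨hcj, hseq⟩
    · -- accepted step
      have hrj : r j = 0 := if_neg (fun hPj => hPj.1 hcj)
      have hG : f (s (j+1)) - f (s j) = marg f (e j) (pos j) (s j) := by
        rw [hmarg_step j hj hcj]; ring
      have hG0 : 0 ≤ marg f (e j) (pos j) (s j) :=
        le_trans (mul_nonneg (hc (e j)).le hτ) hcj.2
      have hs1e : s (j+1) (e j) = pos j := by rw [hseq, upd_self]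
      by_cases hqp : o (e j) = pos j
      · have heq : O (j+1) = O j := by
          rw [hOsucc j hj, hs1e]
          funext e'
          by_cases he : e' = e j
          · subst he; rw [upd_self, hOje j hj]; exact hqp.symm
          · rw [upd_other _ _ _ he]
        rw [heq, hrj]; linarith
      · by_cases hq0 : o (e j) = 0
        · have hOje0 : O j (e j) = 0 := by rw [hOje j hj]; exact hq0
          have hOseq : O (j+1) = upd (O j) (e j) (pos j) := by
            rw [hOsucc j hj, hs1e]
          have hm : f (O (j+1)) - f (O j) = marg f (e j) (pos j) (O j) := by
            rw [marg_eq_upd f _ _ _ hOje0, hOseq]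
          set l := if pos j = 1 then 2 else 1 with hl
          have hl0 : l ≠ 0 ∧ l ≤ k ∧ l ≠ pos j := by
            rw [hl]; split
            · refine ⟨by omega, hk, by omega⟩
            · refine ⟨by omega, by omega, by omega⟩
          have h1 : 0 ≤ marg f (e j) (pos j) (O j) + marg f (e j) l (O j) :=
            pairwise_mono hsub (O j) (hOk j) (e j) hOje0 (hposne j hj)
              (hposk j hj).2 hl0.1 hl0.2.1 (Ne.symm hl0.2.2)
          have h2 : marg f (e j) l (O j) ≤ marg f (e j) l (s j) :=
            orthant hsub (s j) (O j) (hks j hj.le) (hOk j) (hOs j hj.le)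
              (e j) hOje0 hl0.1 hl0.2.1
          have h3 : marg f (e j) l (s j) ≤ marg f (e j) (pos j) (s j) :=
            hbest j hj l (Nat.one_le_iff_ne_zero.mpr hl0.1) hl0.2.1
          rw [hrj]; linarith
        · set mid := upd (O j) (e j) 0 with hmid
          have hmide : mid (e j) = 0 := upd_self _ _ _
          have hmidk : IsKSet k mid := upd_isKSet (hOk j) (e j) (Nat.zero_le k)
          have hOjmid : O j = upd mid (e j) (o (e j)) := by
            funext e'
            by_cases he : e' = e j
            · subst he; rw [upd_self]; exact hOje j hj
            · rw [upd_other _ _ _ he, hmid, upd_other _ _ _ he]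
          have hOsmid : O (j+1) = upd mid (e j) (pos j) := by
            rw [hOsucc j hj, hs1e]
            funext e'
            by_cases he : e' = e j
            · subst he; rw [upd_self, upd_self]
            · rw [upd_other _ _ _ he, upd_other _ _ _ he, hmid, upd_other _ _ _ he]
          have hm1 : f (O j) - f mid = marg f (e j) (o (e j)) mid := by
            rw [marg_eq_upd f _ _ _ hmide, ← hOjmid]
          have hm2 : f (O (j+1)) - f mid = marg f (e j) (pos j) mid := by
            rw [marg_eq_upd f _ _ _ hmide, ← hOsmid]
          have hKLEmid : KLE (s j) mid := by
            intro e' hne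
            have he : e' ≠ e j := by
              intro h'
              rw [h', hfree j hj] at hne
              exact hne rfl
            rw [hmid, upd_other _ _ _ he]
            exact hOs j hj.le e' hne
          have h1 : marg f (e j) (o (e j)) mid ≤ marg f (e j) (o (e j)) (s j) :=
            orthant hsub (s j) mid (hks j hj.le) hmidk hKLEmid (e j) hmide
              hq0 (ho (e j))
          have h2 : marg f (e j) (o (e j)) (s j) ≤ marg f (e j) (pos j) (s j) :=
            hbest j hj _ (Nat.one_le_iff_ne_zero.mpr hq0) (ho (e j))
          have h3 : 0 ≤ marg f (e j) (pos j) mid + marg f (e j) (o (e j)) mid :=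
            pairwise_mono hsub mid hmidk (e j) hmide (hposne j hj)
              (hposk j hj).2 hq0 (ho (e j)) (fun h' => hqp h'.symm)
          rw [hrj]; linarith
    · -- rejected step
      have hs1e : s (j+1) (e j) = 0 := by rw [hseq]; exact hfree j hj
      by_cases hq0 : o (e j) = 0
      · have hrj : r j = 0 := if_neg (fun hPj => hPj.2 hq0)
        have heq : O (j+1) = O j := by
          rw [hOsucc j hj, hs1e]
          funext e'
          by_cases he : e' = e j
          · subst he; rw [upd_self, hOje j hj]; exact hq0.symm
          · rw [upd_other _ _ _ he]
        rw [heq, hrj, hseq]; linarith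
      · have hrj : r j = marg f (e j) (o (e j)) (s j) := if_pos ⟨hcj, hq0⟩
        have hO1e : O (j+1) (e j) = 0 := by
          rw [hOsucc j hj, upd_self, hs1e]
        have hOjeq : O j = upd (O (j+1)) (e j) (o (e j)) := by
          funext e'
          by_cases he : e' = e j
          · subst he; rw [upd_self]; exact hOje j hj
          · rw [upd_other _ _ _ he, hOsucc j hj, upd_other _ _ _ he]
        have hm : f (O j) - f (O (j+1)) = marg f (e j) (o (e j)) (O (j+1)) := by
          rw [marg_eq_upd f _ _ _ hO1e, ← hOjeq]
        have hKLE1 : KLE (s j) (O (j+1)) := by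
          have h' := hOs (j+1) hj
          rw [hseq] at h'
          exact h'
        have h1 : marg f (e j) (o (e j)) (O (j+1)) ≤ marg f (e j) (o (e j)) (s j) :=
          orthant hsub (s j) (O (j+1)) (hks j hj.le) (hOk (j+1)) hKLE1 (e j)
            hO1e hq0 (ho (e j))
        rw [hrj, hseq]; linarith
  -- telescoping
  have htel : f o - f (s n) ≤ 2 * f (s n) + ∑ j ∈ Finset.range n, r j := by
    have h1 : ∑ j ∈ Finset.range n, (f (O j) - f (O (j+1))) = f (O 0) - f (O n) :=
      Finset.sum_range_sub' (fun j => f (O j)) n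
    have h2 : ∑ j ∈ Finset.range n, (f (s (j+1)) - f (s j)) = f (s n) - f (s 0) :=
      Finset.sum_range_sub (fun j => f (s j)) n
    have h3 : ∑ j ∈ Finset.range n, (f (O j) - f (O (j+1))) ≤
        ∑ j ∈ Finset.range n, (2 * (f (s (j+1)) - f (s j)) + r j) :=
      Finset.sum_le_sum (fun j hjmem => hkey j (Finset.mem_range.mp hjmem))
    rw [Finset.sum_add_distrib, ← Finset.mul_sum, h2, h1, hO0, hOn, hs0, hf0] at h3
    linarith
  set S : Finset ℕ := (Finset.range n).filter P with hS
  have hSn : ∀ j ∈ S, j < n := fun j hj =>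
    Finset.mem_range.mp (Finset.mem_filter.mp hj).1
  have hSP : ∀ j ∈ S, P j := fun j hj => (Finset.mem_filter.mp hj).2
  have hRsum : ∑ j ∈ Finset.range n, r j = ∑ j ∈ S, marg f (e j) (o (e j)) (s j) := by
    rw [hS, Finset.sum_filter]
  -- bound for budget-rejected elements
  have hmargM : ∀ j, j < n → o (e j) ≠ 0 → marg f (e j) (o (e j)) (s j) ≤ M := by
    intro j hj hq0
    have hzk : IsKSet k (fun _ : V => (0:ℕ)) := fun _ => Nat.zero_le k
    have hKLE0 : KLE (fun _ : V => (0:ℕ)) (s j) := fun e' h' => absurd rfl h'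
    have h1 : marg f (e j) (o (e j)) (s j) ≤ marg f (e j) (o (e j)) (fun _ => 0) :=
      orthant hsub (fun _ => 0) (s j) hzk (hks j hj.le) hKLE0 (e j) (hfree j hj)
        hq0 (ho (e j))
    have h2 : marg f (e j) (o (e j)) (fun _ => 0) = f (singl (e j) (o (e j))) := by
      rw [marg_eq_upd f _ _ _ rfl, hf0]
      have h' : upd (fun _ : V => (0:ℕ)) (e j) (o (e j)) = singl (e j) (o (e j)) := rfl
      rw [h', sub_zero]
    have h3 : f (singl (e j) (o (e j))) ≤ M :=
      hem (e j) _ (Nat.one_le_iff_ne_zero.mpr hq0) (ho (e j))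
    linarith
  -- bound for threshold-rejected elements
  have hmargT : ∀ j, j < n → ¬ cond j → o (e j) ≠ 0 →
      cost c (s j) + c (e j) ≤ B →
      marg f (e j) (o (e j)) (s j) ≤ c (e j) * τ := by
    intro j hj hnc hq0 hbud
    have hth : ¬ c (e j) * τ ≤ marg f (e j) (pos j) (s j) := fun h' => hnc ⟨hbud, h'⟩
    have h1 := hbest j hj _ (Nat.one_le_iff_ne_zero.mpr hq0) (ho (e j))
    linarith [lt_of_not_ge hth]
  -- generic bound on sums of costs over distinct steps
  have hsum_c : ∀ (F : Finset ℕ) (E : Finset V), (∀ j ∈ F, j < n) →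
      (∀ j ∈ F, e j ∈ E) → ∑ j ∈ F, c (e j) ≤ ∑ e' ∈ E, c e' := by
    intro F E hFn hFE
    have hinjF : ∀ x ∈ F, ∀ y ∈ F, e x = e y → x = y :=
      fun x hx y hy hxy => hinj x y (hFn x hx) (hFn y hy) hxy
    have himg : ∑ e' ∈ F.image e, c e' = ∑ j ∈ F, c (e j) :=
      Finset.sum_image hinjF
    rw [← himg]
    apply Finset.sum_le_sum_of_subset_of_nonneg
    · intro e' he'
      obtain ⟨j, hjF, rfl⟩ := Finset.mem_image.mp he'
      exact hFE j hjF
    · exact fun e' _ _ => (hc e').le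
  have hcosto : cost c o = ∑ e' ∈ Finset.univ.filter (fun e' => o e' ≠ 0), c e' := rfl
  -- arithmetic facts
  have hfo0 : 0 ≤ f o := hnn o ho
  have hv0 : 0 ≤ v := le_trans (div_nonneg hfo0 (by linarith)) hv1
  have hfov : f o ≤ v * (1 + ε) := by
    rw [div_le_iff₀ (by linarith : (0:ℝ) < 1 + ε)] at hv1; exact hv1
  have hfsnn : 0 ≤ f (s n) := hnn _ (hks n le_rfl)
  have hτB : τ * B = 2 * v / 5 := by
    rw [hτdef]; field_simp
  by_cases hAex : ∃ j ∈ S, ¬ (cost c (s j) + c (e j) ≤ B)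
  · obtain ⟨j₀, hj₀S, hj₀b⟩ := hAex
    have hj₀n : j₀ < n := hSn j₀ hj₀S
    have hPj₀ : P j₀ := hSP j₀ hj₀S
    have hfs1 : ∀ j, j < n → ¬ (cost c (s j) + c (e j) ≤ B) →
        τ * (B - c (e j)) ≤ f (s n) := by
      intro j hj hb
      have h1 : B - c (e j) ≤ cost c (s j) := by linarith [not_le.mp hb]
      have h2 : cost c (s j) ≤ cost c (s n) := hcost_le j hj
      calc τ * (B - c (e j)) ≤ τ * cost c (s n) :=
            mul_le_mul_of_nonneg_left (by linarith) hτ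
        _ ≤ f (s n) := hrun n le_rfl
    by_cases hsmall : ∃ j ∈ S, ¬ (cost c (s j) + c (e j) ≤ B) ∧ c (e j) ≤ B / 2
    · obtain ⟨j₁, hj₁S, hj₁b, hj₁c⟩ := hsmall
      have h1 : τ * (B - c (e j₁)) ≤ f (s n) := hfs1 j₁ (hSn j₁ hj₁S) hj₁b
      have h2 : τ * (B / 2) ≤ τ * (B - c (e j₁)) :=
        mul_le_mul_of_nonneg_left (by linarith) hτ
      have h3 : v / 5 ≤ f (s n) := by
        have h' : τ * (B / 2) = (τ * B) / 2 := by ring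
        rw [h', hτB] at h2
        linarith
      have h4 : (1/5 - ε) * f o ≤ v / 5 := by
        nlinarith [mul_le_mul_of_nonneg_left hfov (by linarith : (0:ℝ) ≤ 1/5 - ε),
          mul_nonneg hε0.le hv0, mul_nonneg (mul_nonneg hε0.le hε0.le) hv0]
      calc (1/5 - ε) * f o ≤ f (s n) := by linarith
        _ ≤ max (f (s n)) M := le_max_left _ _
    · push_neg at hsmall
      have huniq : ∀ j ∈ S, ¬ (cost c (s j) + c (e j) ≤ B) → j = j₀ := by
        intro j hjS hjb
        by_contra hne
        have hjn : j < n := hSn j hjS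
        have hene : e j ≠ e j₀ := fun h' => hne (hinj j j₀ hjn hj₀n h')
        have hcj : B / 2 < c (e j) := hsmall j hjS (not_le.mp hjb)
        have hcj₀ : B / 2 < c (e j₀) := hsmall j₀ hj₀S (not_le.mp hj₀b)
        have hpair : c (e j) + c (e j₀) ≤ cost c o := by
          have hsub2 : ({e j, e j₀} : Finset V) ⊆
              Finset.univ.filter (fun e' => o e' ≠ 0) := by
            intro x hx
            rcases Finset.mem_insert.mp hx with rfl | hx'
            · simp only [Finset.mem_filter, Finset.mem_univ, true_and]
              exact (hSP j hjS).2
            · rw [Finset.mem_singleton.mp hx']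
              simp only [Finset.mem_filter, Finset.mem_univ, true_and]
              exact hPj₀.2
          have h5 := Finset.sum_le_sum_of_subset_of_nonneg hsub2
            (fun x _ _ => (hc x).le)
          rw [Finset.sum_pair hene] at h5
          rw [hcosto]; exact h5
        linarith
      have hTb : ∀ j ∈ S.erase j₀, marg f (e j) (o (e j)) (s j) ≤ c (e j) * τ := by
        intro j hj
        have hjS := Finset.mem_of_mem_erase hj
        have hjne := Finset.ne_of_mem_erase hj
        have hbud : cost c (s j) + c (e j) ≤ B := by
          by_contra hb; exact hjne (huniq j hjS hb)
        exact hmargT j (hSn j hjS) (hSP j hjS).1 (hSP j hjS).2 hbud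
      have hsplit : ∑ j ∈ S, marg f (e j) (o (e j)) (s j)
          = ∑ j ∈ S.erase j₀, marg f (e j) (o (e j)) (s j)
            + marg f (e j₀) (o (e j₀)) (s j₀) :=
        (Finset.sum_erase_add S _ hj₀S).symm
      have hc0mem : e j₀ ∈ Finset.univ.filter (fun e' => o e' ≠ 0) := by
        simp only [Finset.mem_filter, Finset.mem_univ, true_and]
        exact hPj₀.2
      have hsumT : ∑ j ∈ S.erase j₀, c (e j) ≤ cost c o - c (e j₀) := by
        have h6 := hsum_c (S.erase j₀)
          ((Finset.univ.filter (fun e' => o e' ≠ 0)).erase (e j₀))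
          (fun j hj => hSn j (Finset.mem_of_mem_erase hj))
          (fun j hj => by
            apply Finset.mem_erase.mpr
            refine ⟨fun h' => Finset.ne_of_mem_erase hj
              (hinj j j₀ (hSn j (Finset.mem_of_mem_erase hj)) hj₀n h'), ?_⟩
            simp only [Finset.mem_filter, Finset.mem_univ, true_and]
            exact (hSP j (Finset.mem_of_mem_erase hj)).2)
        rw [Finset.sum_erase_eq_sub hc0mem] at h6
        rw [hcosto]; exact h6
      have hsum1 : ∑ j ∈ S.erase j₀, marg f (e j) (o (e j)) (s j)
          ≤ (cost c o - c (e j₀)) * τ := by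
        calc ∑ j ∈ S.erase j₀, marg f (e j) (o (e j)) (s j)
            ≤ ∑ j ∈ S.erase j₀, c (e j) * τ := Finset.sum_le_sum hTb
          _ = (∑ j ∈ S.erase j₀, c (e j)) * τ := (Finset.sum_mul _ _ _).symm
          _ ≤ (cost c o - c (e j₀)) * τ := mul_le_mul_of_nonneg_right hsumT hτ
      have hMj₀ : marg f (e j₀) (o (e j₀)) (s j₀) ≤ M := hmargM j₀ hj₀n hPj₀.2
      have hτc : (cost c o - c (e j₀)) * τ ≤ τ * (B - c (e j₀)) := by
        rw [mul_comm]; exact mul_le_mul_of_nonneg_left (by linarith) hτ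
      have hfs2 := hfs1 j₀ hj₀n hj₀b
      have hfinal : f o ≤ 4 * f (s n) + M := by
        rw [hRsum, hsplit] at htel
        linarith
      have hMle : M ≤ max (f (s n)) M := le_max_right _ _
      have hfle : f (s n) ≤ max (f (s n)) M := le_max_left _ _
      have h7 : f o ≤ 5 * max (f (s n)) M := by linarith
      have h8 : 0 ≤ ε * f o := mul_nonneg hε0.le hfo0
      have h9 : (1/5 - ε) * f o = f o / 5 - ε * f o := by ring
      rw [h9]
      linarith
  · push_neg at hAex
    have hTb : ∀ j ∈ S, marg f (e j) (o (e j)) (s j) ≤ c (e j) * τ :=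
      fun j hj => hmargT j (hSn j hj) (hSP j hj).1 (hSP j hj).2 (hAex j hj)
    have hsumT : ∑ j ∈ S, c (e j) ≤ cost c o := by
      rw [hcosto]
      refine hsum_c S _ hSn (fun j hj => ?_)
      simp only [Finset.mem_filter, Finset.mem_univ, true_and]
      exact (hSP j hj).2
    have hsum1 : ∑ j ∈ S, marg f (e j) (o (e j)) (s j) ≤ 2 * v / 5 := by
      calc ∑ j ∈ S, marg f (e j) (o (e j)) (s j) ≤ ∑ j ∈ S, c (e j) * τ :=
          Finset.sum_le_sum hTb
        _ = (∑ j ∈ S, c (e j)) * τ := (Finset.sum_mul _ _ _).symm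
        _ ≤ B * τ := mul_le_mul_of_nonneg_right (le_trans hsumT hoB) hτ
        _ = 2 * v / 5 := by rw [mul_comm]; exact hτB
    have hfs : f o ≤ 3 * f (s n) + 2 * v / 5 := by
      rw [hRsum] at htel; linarith
    have h5 : f o / 5 ≤ f (s n) := by linarith
    have h6 : (1/5 - ε) * f o ≤ f o / 5 := by
      have h8 : 0 ≤ ε * f o := mul_nonneg hε0.le hfo0
      have h9 : (1/5 - ε) * f o = f o / 5 - ε * f o := by ring
      rw [h9]; linarith
    calc (1/5 - ε) * f o ≤ f o / 5 := h6
      _ ≤ f (s n) := h5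
      _ ≤ max (f (s n)) M := le_max_left _ _
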